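/- Let u : [0,∞) → ℝ^N be differentiable and satisfy the LCA dynamics τ·u̇(t) = −u(t) − (ΦᵀΦ − I)·T_λ(u(t)) + Φᵀy, where T_λ is the soft-thresholding function. Let I be an open interval on which the signed active pattern is constant: for each index n, either u_n(t) > λ for all t ∈ I, or u_n(t) < −λ for all t ∈ I, or |u_n(t)| < λ for all t ∈ I. Then the function t ↦ V(T_λ(u(t))) is differentiable on I with derivative d/dt V(T_λ(u(t))) = −τ·Σ_{n ∈ Γ(t)} |u̇_n(t)|², where Γ(t) = {n : |u_n(t)| > λ}. In particular this derivative is ≤ 0. -/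

import Mathlib

open Matrix

/-- The soft-thresholding function `T_λ`. -/
noncomputable def softThresh (lam u : ℝ) : ℝ :=
  if |u| ≤ lam then 0 else u - lam * Real.sign u

/-- The BPDN objective `V(a) = (1/2)‖y − Φa‖₂² + λ‖a‖₁`. -/
noncomputable def bpdn {M N : ℕ} (Φ : Matrix (Fin M) (Fin N) ℝ)
    (y : Fin M → ℝ) (lam : ℝ) (a : Fin N → ℝ) : ℝ :=
  (1 / 2) * ∑ m, (y m - (Φ *ᵥ a) m) ^ 2 + lam * ∑ n, |a n|

/-- on an open interval `I = (a,b) ⊆ [0,∞)` on which the signed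
active pattern of the trajectory is constant, the map `t ↦ V(T_λ(u(t)))` is
differentiable with derivative `−τ Σ_{n ∈ Γ(t)} |u̇_n(t)|² ≤ 0`, where
`Γ(t) = {n : |u_n(t)| > λ}`. -/
theorem stmt17 {M N : ℕ} (hM : 0 < M) (hN : 0 < N)
    (Φ : Matrix (Fin M) (Fin N) ℝ) (y : Fin M → ℝ)
    (lam : ℝ) (hlam : 0 < lam) (τ : ℝ) (hτ : 0 < τ)
    (u u' : ℝ → Fin N → ℝ)
    (hderiv : ∀ t : ℝ, 0 ≤ t → HasDerivWithinAt u (u' t) (Set.Ici 0) t)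
    (hdyn : ∀ t : ℝ, 0 ≤ t →
      τ • u' t =
        -(u t) - (Φᵀ * Φ - 1) *ᵥ (fun n => softThresh lam (u t n)) + Φᵀ *ᵥ y)
    (a b : ℝ) (hI : Set.Ioo a b ⊆ Set.Ici 0)
    (hpattern : ∀ n : Fin N,
      (∀ t ∈ Set.Ioo a b, lam < u t n) ∨
      (∀ t ∈ Set.Ioo a b, u t n < -lam) ∨
      (∀ t ∈ Set.Ioo a b, |u t n| < lam)) :
    ∀ t ∈ Set.Ioo a b,
      HasDerivAt (fun s => bpdn Φ y lam (fun n => softThresh lam (u s n)))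
        (-τ * ∑ n : Fin N, if lam < |u t n| then (u' t n) ^ 2 else 0) t ∧
      -τ * (∑ n : Fin N, if lam < |u t n| then (u' t n) ^ 2 else 0) ≤ 0 := by
  intro t ht
  obtain ⟨hat, htb⟩ := ht
  have htmem : (0:ℝ) ≤ t := hI ⟨hat, htb⟩
  have ha0 : 0 ≤ a := by
    by_contra h
    push_neg at h
    have h2 : a / 2 ∈ Set.Ioo a b := ⟨by linarith, by linarith⟩
    have := hI h2
    simp only [Set.mem_Ici] at this
    linarith
  have ht0 : 0 < t := lt_of_le_of_lt ha0 hat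
  have hmem : Set.Ioo a b ∈ nhds t := isOpen_Ioo.mem_nhds ⟨hat, htb⟩
  have hut : HasDerivAt u (u' t) t :=
    (hderiv t ht0.le).hasDerivAt (Ici_mem_nhds ht0)
  have hun : ∀ n : Fin N, HasDerivAt (fun s => u s n) (u' t n) t := fun n =>
    (ContinuousLinearMap.proj (R := ℝ) (φ := fun _ : Fin N => ℝ) n).hasFDerivAt.comp_hasDerivAt t hut
  set c : Fin N → ℝ := fun n => if lam < |u t n| then u' t n else 0 with hc
  set d : Fin N → ℝ := fun n =>
    if lam < u t n then u' t n else if u t n < -lam then -u' t n else 0 with hd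
  -- per-coordinate facts
  have hkey : ∀ n : Fin N,
      HasDerivAt (fun s => softThresh lam (u s n)) (c n) t ∧
      HasDerivAt (fun s => |softThresh lam (u s n)|) (d n) t ∧
      -(τ * u' t n + u t n - softThresh lam (u t n)) * c n + lam * d n =
        -τ * (if lam < |u t n| then (u' t n) ^ 2 else 0) := by
    intro n
    rcases hpattern n with hp | hp | hp
    · -- positive case
      have htp := hp t ⟨hat, htb⟩
      have habs : lam < |u t n| := by rw [abs_of_pos (by linarith)]; exact htp
      have haux : ∀ s ∈ Set.Ioo a b, softThresh lam (u s n) = u s n - lam := by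
        intro s hs
        have hs' := hp s hs
        rw [softThresh, if_neg (by rw [abs_of_pos (by linarith)]; linarith),
          Real.sign_of_pos (by linarith), mul_one]
      have hcn : c n = u' t n := if_pos habs
      have hdn : d n = u' t n := if_pos htp
      have hA : HasDerivAt (fun s => softThresh lam (u s n)) (c n) t := by
        rw [hcn]
        exact ((hun n).sub_const lam).congr_of_eventuallyEq
          (Filter.eventuallyEq_of_mem hmem haux)
      have hAt : softThresh lam (u t n) = u t n - lam := haux t ⟨hat, htb⟩
      refine ⟨hA, ?_, ?_⟩
      · rw [hdn]
        refine ((hun n).sub_const lam).congr_of_eventuallyEq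
          (Filter.eventuallyEq_of_mem hmem fun s hs => ?_)
        rw [haux s hs, abs_of_pos (by linarith [hp s hs])]
      · rw [hcn, hdn, hAt, if_pos habs]; ring
    · -- negative case
      have htp := hp t ⟨hat, htb⟩
      have habs : lam < |u t n| := by rw [abs_of_neg (by linarith)]; linarith
      have haux : ∀ s ∈ Set.Ioo a b, softThresh lam (u s n) = u s n + lam := by
        intro s hs
        have hs' := hp s hs
        rw [softThresh, if_neg (by rw [abs_of_neg (by linarith)]; linarith),
          Real.sign_of_neg (by linarith)]
        ring
      have hcn : c n = u' t n := if_pos habs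
      have hdn : d n = -u' t n := by
        rw [hd]; simp only []
        rw [if_neg (by linarith), if_pos (by linarith)]
      have hA : HasDerivAt (fun s => softThresh lam (u s n)) (c n) t := by
        rw [hcn]
        exact ((hun n).add_const lam).congr_of_eventuallyEq
          (Filter.eventuallyEq_of_mem hmem haux)
      have hAt : softThresh lam (u t n) = u t n + lam := haux t ⟨hat, htb⟩
      refine ⟨hA, ?_, ?_⟩
      · rw [hdn]
        have : HasDerivAt (fun s => -(u s n + lam)) (-u' t n) t :=
          ((hun n).add_const lam).neg
        refine this.congr_of_eventuallyEq
          (Filter.eventuallyEq_of_mem hmem fun s hs => ?_)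
        rw [haux s hs, abs_of_neg (by linarith [hp s hs])]
      · rw [hcn, hdn, hAt, if_pos habs]; ring
    · -- inactive case
      have htp := hp t ⟨hat, htb⟩
      have habs : ¬ lam < |u t n| := by linarith
      have haux : ∀ s ∈ Set.Ioo a b, softThresh lam (u s n) = 0 := by
        intro s hs
        rw [softThresh, if_pos (le_of_lt (hp s hs))]
      have hcn : c n = 0 := if_neg habs
      have hdn : d n = 0 := by
        rw [hd]; simp only []
        rw [if_neg (by cases abs_lt.mp htp; linarith),
          if_neg (by cases abs_lt.mp htp; linarith)]
      refine ⟨?_, ?_, ?_⟩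
      · rw [hcn]
        exact (hasDerivAt_const t (0 : ℝ)).congr_of_eventuallyEq
          (Filter.eventuallyEq_of_mem hmem haux)
      · rw [hdn]
        refine (hasDerivAt_const t (0 : ℝ)).congr_of_eventuallyEq
          (Filter.eventuallyEq_of_mem hmem fun s hs => ?_)
        rw [haux s hs, abs_zero]
      · rw [hcn, hdn, if_neg habs]; ring
  have hA := fun n => (hkey n).1
  have hD := fun n => (hkey n).2.1
  have hE := fun n => (hkey n).2.2
  -- dynamics componentwise
  have hdyncomp : ∀ n : Fin N,
      ∑ m, Φ m n * (y m - ∑ k, Φ m k * softThresh lam (u t k)) =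
        τ * u' t n + u t n - softThresh lam (u t n) := by
    intro n
    have h := congrFun (hdyn t ht0.le) n
    have hexp : ∑ x : Fin N, (Φᵀ * Φ - 1 : Matrix (Fin N) (Fin N) ℝ) n x * softThresh lam (u t x) =
        ∑ m, Φ m n * (∑ k, Φ m k * softThresh lam (u t k)) - softThresh lam (u t n) := by
      have : ((Φᵀ * Φ - 1) *ᵥ fun k => softThresh lam (u t k)) n =
          ∑ m, Φ m n * (∑ k, Φ m k * softThresh lam (u t k)) - softThresh lam (u t n) := by
        simp [Matrix.mulVec, dotProduct, Matrix.sub_apply, Matrix.mul_apply,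
          Matrix.one_apply, sub_mul, Finset.sum_sub_distrib, Finset.sum_ite_eq,
          Finset.sum_mul, Finset.mul_sum]
        rw [Finset.sum_comm]; simp [mul_assoc]
      simpa [Matrix.mulVec, dotProduct] using this
    simp only [Pi.smul_apply, smul_eq_mul, Pi.add_apply, Pi.sub_apply, Pi.neg_apply,
      Matrix.mulVec, dotProduct, Matrix.transpose_apply] at h
    rw [hexp] at h
    have : ∑ m, Φ m n * (y m - ∑ k, Φ m k * softThresh lam (u t k)) =
        ∑ m, Φ m n * y m - ∑ m, Φ m n * (∑ k, Φ m k * softThresh lam (u t k)) := by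
      rw [← Finset.sum_sub_distrib]
      exact Finset.sum_congr rfl fun m _ => by ring
    rw [this]
    linarith [h]
  -- derivative of the quadratic part
  have h1 : HasDerivAt
      (fun s => ∑ m, (y m - ∑ n, Φ m n * softThresh lam (u s n)) ^ 2)
      (∑ m, (2 : ℝ) * (y m - ∑ n, Φ m n * softThresh lam (u t n)) ^ 1 *
        (-(∑ n, Φ m n * c n))) t := by
    refine HasDerivAt.fun_sum fun m _ => ?_
    have hin : HasDerivAt (fun s => y m - ∑ n, Φ m n * softThresh lam (u s n))
        (-(∑ n, Φ m n * c n)) t :=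
      HasDerivAt.const_sub (y m) (HasDerivAt.fun_sum fun n _ => (hA n).const_mul (Φ m n))
    exact hin.pow 2
  have h2 : HasDerivAt (fun s => ∑ n, |softThresh lam (u s n)|) (∑ n, d n) t :=
    HasDerivAt.fun_sum fun n _ => hD n
  have main := (h1.const_mul ((1:ℝ)/2)).add (h2.const_mul lam)
  have feq : (fun s => bpdn Φ y lam (fun n => softThresh lam (u s n))) =
      fun s => (1/2) * ∑ m, (y m - ∑ n, Φ m n * softThresh lam (u s n)) ^ 2 +
        lam * ∑ n, |softThresh lam (u s n)| := by
    funext s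
    simp [bpdn, Matrix.mulVec, dotProduct]
  -- derivative value equality
  have key : ∑ m, (2 : ℝ) * (y m - ∑ n, Φ m n * softThresh lam (u t n)) ^ 1 *
      (-(∑ n, Φ m n * c n)) =
      ∑ n, (-2) * ((τ * u' t n + u t n - softThresh lam (u t n)) * c n) := by
    have step1 : ∀ m : Fin M, (2 : ℝ) * (y m - ∑ n, Φ m n * softThresh lam (u t n)) ^ 1 *
        (-(∑ n, Φ m n * c n)) =
        ∑ n, (-(2 * (y m - ∑ k, Φ m k * softThresh lam (u t k)))) * (Φ m n * c n) := by
      intro m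
      rw [← Finset.mul_sum]; ring
    rw [Finset.sum_congr rfl fun m _ => step1 m, Finset.sum_comm]
    refine Finset.sum_congr rfl fun n _ => ?_
    rw [show ((-2 : ℝ)) * ((τ * u' t n + u t n - softThresh lam (u t n)) * c n) =
      (-2 * c n) * (∑ m, Φ m n * (y m - ∑ k, Φ m k * softThresh lam (u t k))) by
        rw [hdyncomp n]; ring]
    rw [Finset.mul_sum]
    exact Finset.sum_congr rfl fun m _ => by ring
  have deq : (1/2 : ℝ) * (∑ m, (2 : ℝ) * (y m - ∑ n, Φ m n * softThresh lam (u t n)) ^ 1 *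
      (-(∑ n, Φ m n * c n))) + lam * ∑ n, d n =
      -τ * ∑ n : Fin N, (if lam < |u t n| then (u' t n) ^ 2 else 0) := by
    rw [key, Finset.mul_sum, Finset.mul_sum, Finset.mul_sum, ← Finset.sum_add_distrib]
    refine Finset.sum_congr rfl fun n _ => ?_
    have := hE n
    nlinarith [hE n]
  constructor
  · rw [feq, ← deq]
    exact main
  · have hs : 0 ≤ ∑ n : Fin N, (if lam < |u t n| then (u' t n) ^ 2 else 0) :=
      Finset.sum_nonneg fun n _ => by split <;> positivity
    nlinarith
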